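/- Given an Fg-algebra A, the algebra ◇(A) = {x ∧ ⊤ : x ∈ A}, with restricted operations and bounds 0 and ⊤, is a Boolean algebra. -/
import Mathlib


/-- A DFg-algebra: a bi-centered De Morgan lattice (distributive lattice with
involutive De Morgan negation and two distinct negation fixed points `⊥', ⊤'`)
with a lower bound `⊥` such that `⊥' ⊓ ⊤' = ⊥`, together with the
cancellation property `a ⊓ ⊤' = b ⊓ ⊤' ∧ ¬a ⊓ ⊤' = ¬b ⊓ ⊤' → a = b`
(which follows from distributivity and absorption as in the centered Kleene case). -/
class DFgAlgebra (A : Type*) extends DistribLattice A, OrderBot A where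
  neg : A → A
  pbot : A
  ptop : A
  neg_neg : ∀ a : A, neg (neg a) = a
  neg_inf : ∀ a b : A, neg (a ⊓ b) = neg a ⊔ neg b
  neg_pbot : neg pbot = pbot
  neg_ptop : neg ptop = ptop
  pbot_ne_ptop : pbot ≠ ptop
  pbot_inf_ptop : pbot ⊓ ptop = ⊥
  cancel : ∀ a b : A, a ⊓ ptop = b ⊓ ptop → neg a ⊓ ptop = neg b ⊓ ptop → a = b


/-- An Fg-algebra: a DFg-algebra with an implication satisfying (F1)–(F6),
where `◇x := x ⊓ ⊤'`. -/
class FgAlgebra (A : Type*) extends DFgAlgebra A where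
  imp : A → A → A
  f1 : ∀ x y : A, x ⊓ y = x ⊓ imp x y
  f2 : ∀ x y : A, imp x y ≤ (x ⊓ y) ⊔ ptop
  f3 : ∀ x y z : A, imp (x ⊓ y) z = imp x (imp y z)
  f4 : ∀ x y : A, ptop ≤ imp x (imp y y)
  f5 : ∀ x y : A, ptop ≤ imp (imp (imp x y) x) x
  f6 : ∀ x y : A, imp x y ⊓ ptop = imp (x ⊓ ptop) (y ⊓ ptop)

open DFgAlgebra FgAlgebra


section FgAux
variable {A : Type*} [FgAlgebra A]

lemma fg_mem_iff {a : A} :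
    a ∈ Set.range (fun x : A => x ⊓ ptop) ↔ a ≤ ptop := by
  constructor
  · rintro ⟨x, rfl⟩; exact inf_le_right
  · intro h; exact ⟨a, inf_eq_left.mpr h⟩

lemma fg_ptop_le_imp {u v : A} (h : u ≤ v) : (ptop : A) ≤ imp u v := by
  have h1 : u ⊓ v = u := inf_eq_left.mpr h
  have h2 := f4 (A := A) u v
  rw [← f3, h1] at h2
  exact h2

lemma fg_le_imp {a b z : A} (hb : b ≤ ptop) (h : a ⊓ b ≤ z) : b ≤ imp a z := by
  have h1 : (ptop : A) ≤ imp (a ⊓ b) z := fg_ptop_le_imp h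
  rw [inf_comm, f3] at h1
  have h2 : b ≤ imp b (imp a z) := le_trans hb h1
  have h3 := f1 b (imp a z)
  rw [inf_eq_left.mpr h2] at h3
  exact inf_eq_left.mp h3

lemma fg_inf_imp_le {a z : A} : a ⊓ imp a z ≤ z := by
  rw [← f1]; exact inf_le_right

lemma fg_imp_le_ptop {a z : A} (ha : a ≤ ptop) (_ : z ≤ ptop) :
    imp a z ≤ ptop := by
  refine le_trans (f2 a z) (sup_le ?_ le_rfl)
  exact le_trans inf_le_left ha

end FgAux

/-- given an Fg-algebra `A`, the image `◇(A) = {x ⊓ ⊤' : x ∈ A}`,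
with the restricted operations and bounds `⊥` and `⊤'`, is a Boolean algebra,
i.e. a generalized Boolean algebra (closure, residuation, Peirce's law, top
`⊤'`) with a bottom element `⊥`. -/

theorem fg_diamond_boolean {A : Type*} [FgAlgebra A] :
    let S : Set A := Set.range (fun x : A => x ⊓ ptop)
    (∀ a ∈ S, ∀ b ∈ S, a ⊓ b ∈ S ∧ a ⊔ b ∈ S ∧ imp a b ∈ S) ∧
    ((ptop : A) ∈ S) ∧
    ((⊥ : A) ∈ S) ∧
    (∀ a ∈ S, ⊥ ≤ a ∧ a ≤ ptop) ∧
    (∀ a ∈ S, ∀ b ∈ S, ∀ z ∈ S, (a ⊓ b ≤ z ↔ b ≤ imp a z)) ∧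
    (∀ a ∈ S, ∀ b ∈ S, imp (imp a b) a = a) := by
  intro S
  have hmem : ∀ {a : A}, a ∈ S ↔ a ≤ ptop := fun {a} => fg_mem_iff
  refine ⟨?_, ?_, ?_, ?_, ?_, ?_⟩
  · intro a ha b hb
    rw [hmem] at ha hb
    exact ⟨hmem.mpr (le_trans inf_le_left ha), hmem.mpr (sup_le ha hb),
      hmem.mpr (fg_imp_le_ptop ha hb)⟩
  · exact hmem.mpr le_rfl
  · exact hmem.mpr bot_le
  · intro a ha; exact ⟨bot_le, hmem.mp ha⟩
  · intro a _ b hb z _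
    rw [hmem] at hb
    constructor
    · exact fun h => fg_le_imp hb h
    · intro h
      calc a ⊓ b ≤ a ⊓ imp a z := inf_le_inf_left a h
        _ ≤ z := fg_inf_imp_le
  · intro a ha b hb
    rw [hmem] at ha hb
    have hp : imp a b ≤ ptop := fg_imp_le_ptop ha hb
    have hq : imp (imp a b) a ≤ ptop := fg_imp_le_ptop hp ha
    have h5 : (ptop : A) ≤ imp (imp (imp a b) a) a := f5 a b
    have h6 : imp (imp a b) a ≤ imp (imp (imp a b) a) a := le_trans hq h5
    have h7 := f1 (imp (imp a b) a) a
    rw [inf_eq_left.mpr h6] at h7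
    have hle : imp (imp a b) a ≤ a := inf_eq_left.mp h7
    have hge : a ≤ imp (imp a b) a := fg_le_imp ha inf_le_right
    exact le_antisymm hle hge
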